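/- arXiv:1610.04880 — 3 statements merged into one kernel-verified Lean document; each statement's English description precedes it below -/
import Mathlib

section
/- Assume the seed covariance satisfies $|\rho(u,v)|\le C(|u|\wedge|v|)$ for all $u,v$ and the trawl satisfies $\sum_{j\ge 1} j|a_j|<\infty$. Then the trawl-process covariances are absolutely summable: $\sum_{k=1}^\infty\big|\sum_{j=0}^\infty\rho(a_j,a_{j+k})\big|<\infty$. -/
open Filter Topology

/-- If the seed covariance satisfies `|ρ(u,v)| ≤ C (|u| ∧ |v|)` and
`∑ j |a_j| < ∞`, then the trawl-process covariances
`Cov(X_0, X_k) = ∑_j ρ(a_j, a_{j+k})` are absolutely summable over `k ≥ 1`. -/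
theorem trawl_cov_summable
    (ρ : ℝ → ℝ → ℝ) (a : ℕ → ℝ) (C : ℝ) (hC : 0 < C)
    (hρ : ∀ u v : ℝ, |ρ u v| ≤ C * min |u| |v|)
    (ha : Summable (fun j : ℕ => (j : ℝ) * |a j|)) :
    Summable (fun k : ℕ => |∑' j : ℕ, ρ (a j) (a (j + (k + 1)))|) := by
  set b : ℕ → ℝ := fun n => |a n| with hbdef
  have hbnn : ∀ n, 0 ≤ b n := fun n => abs_nonneg _
  -- b is summable
  have h1 : Summable fun n : ℕ => b (n + 1) := by
    have hs : Summable fun n : ℕ => ((n + 1 : ℕ) : ℝ) * |a (n + 1)| :=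
      (summable_nat_add_iff 1).2 ha
    refine hs.of_nonneg_of_le (fun n => hbnn _) (fun n => ?_)
    have : (1 : ℝ) ≤ ((n + 1 : ℕ) : ℝ) := by exact_mod_cast Nat.one_le_iff_ne_zero.2 (Nat.succ_ne_zero n)
    nlinarith [hbnn (n + 1)]
  have hb : Summable b := (summable_nat_add_iff 1).1 h1
  -- the auxiliary function g
  set g : ℕ × ℕ → ℝ := fun p => if p.2 < p.1 then C * b p.1 else 0 with hgdef
  have hgnn : ∀ p, 0 ≤ g p := by
    intro p
    by_cases h : p.2 < p.1 <;> simp [hgdef, h, mul_nonneg hC.le (hbnn _)]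
  have hgslice : ∀ n : ℕ, Summable fun k => g (n, k) := by
    intro n
    apply summable_of_ne_finset_zero (s := Finset.range n)
    intro k hk
    simp only [Finset.mem_range, not_lt] at hk
    simp [hgdef, Nat.not_lt.2 hk]
  have hgsum : ∀ n : ℕ, (∑' k, g (n, k)) = (n : ℝ) * (C * b n) := by
    intro n
    rw [tsum_eq_sum (s := Finset.range n) (by
      intro k hk
      simp only [Finset.mem_range, not_lt] at hk
      simp [hgdef, Nat.not_lt.2 hk])]
    simp [hgdef, Finset.sum_ite_of_true, Finset.mem_range]
  have hg : Summable g := by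
    refine (summable_prod_of_nonneg hgnn).2 ⟨hgslice, ?_⟩
    have : Summable fun n : ℕ => (n : ℝ) * (C * b n) := by
      have := ha.mul_left C
      refine this.congr fun n => by ring
    exact this.congr fun n => (hgsum n).symm
  -- F is summable via an injection into g
  set F : ℕ × ℕ → ℝ := fun p => C * b (p.2 + p.1 + 1) with hFdef
  have hFnn : ∀ p, 0 ≤ F p := fun p => mul_nonneg hC.le (hbnn _)
  have hF : Summable F := by
    have hinj : Function.Injective (fun p : ℕ × ℕ => (p.2 + p.1 + 1, p.1)) := by
      rintro ⟨p1, p2⟩ ⟨q1, q2⟩ h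
      simp only [Prod.mk.injEq] at h
      obtain ⟨h1, h2⟩ := h
      exact Prod.ext (by omega) (by omega)
    have := hg.comp_injective hinj
    refine this.congr fun p => ?_
    simp [hgdef, hFdef, Function.comp, Nat.lt_succ_iff, Nat.le_add_left]
  have hFfac : Summable fun k : ℕ => ∑' j, F (k, j) :=
    ((summable_prod_of_nonneg hFnn).1 hF).2
  -- slice summability of F
  have hFk : ∀ k : ℕ, Summable fun j => F (k, j) := ((summable_prod_of_nonneg hFnn).1 hF).1
  -- comparison
  have hρk : ∀ k : ℕ, Summable fun j => |ρ (a j) (a (j + (k + 1)))| := by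
    intro k
    refine (hFk k).of_nonneg_of_le (fun j => abs_nonneg _) (fun j => ?_)
    calc |ρ (a j) (a (j + (k + 1)))| ≤ C * min |a j| |a (j + (k + 1))| := hρ _ _
      _ ≤ C * |a (j + (k + 1))| := by
          exact mul_le_mul_of_nonneg_left (min_le_right _ _) hC.le
      _ = F (k, j) := rfl
  refine hFfac.of_nonneg_of_le (fun k => abs_nonneg _) (fun k => ?_)
  calc |∑' j, ρ (a j) (a (j + (k + 1)))| ≤ ∑' j, |ρ (a j) (a (j + (k + 1)))| := by
        have h : Summable fun j => ‖ρ (a j) (a (j + (k + 1)))‖ := by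
          simpa only [Real.norm_eq_abs] using hρk k
        simpa only [Real.norm_eq_abs] using norm_tsum_le_tsum_norm h
    _ ≤ ∑' j, F (k, j) := by
        refine Summable.tsum_le_tsum (fun j => ?_) (hρk k) (hFk k)
        calc |ρ (a j) (a (j + (k + 1)))| ≤ C * min |a j| |a (j + (k + 1))| := hρ _ _
          _ ≤ F (k, j) := by
              simpa [hFdef, hbdef, add_assoc] using
                mul_le_mul_of_nonneg_left (min_le_right |a j| |a (j + (k + 1))|) hC.le
end

section
/- In the setting of the previous counting process, assume additionally $\mathbb{E}\gamma(v)\mathbf{1}(\tau_1\le u,\tau_2\le v)=o(u)$ as $0\le u\le v\to 0$ and $\mathbb{E}\gamma(v)^2=O(v)$. Then the covariance satisfies $\mathrm{Cov}(\gamma(u),\gamma(v))=(u\wedge v)(1+o(1))$ as $u,v\to 0^+$. -/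
open Filter Topology MeasureTheory ProbabilityTheory Asymptotics

private lemma aux_summable {t : ℕ → ℝ} (ht : Tendsto t atTop atTop) (u : ℝ) :
    Summable (fun k : ℕ => if t (k+1) ≤ u then (1:ℝ) else 0) := by
  obtain ⟨N, hN⟩ := eventually_atTop.mp (ht.eventually_gt_atTop u)
  refine summable_of_ne_finset_zero (s := Finset.range N) (fun k hk => ?_)
  have hkN : N ≤ k := le_of_not_gt (fun h => hk (Finset.mem_range.mpr h))
  exact if_neg (not_le.mpr (hN (k+1) (by omega)))

private lemma aux_nonneg (t : ℕ → ℝ) (u : ℝ) :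
    0 ≤ ∑' k : ℕ, if t (k+1) ≤ u then (1:ℝ) else 0 :=
  tsum_nonneg (fun k => by split <;> norm_num)

private lemma aux_zero {t : ℕ → ℝ} (ht : StrictMono t) {u : ℝ} (h : u < t 1) :
    (∑' k : ℕ, if t (k+1) ≤ u then (1:ℝ) else 0) = 0 := by
  convert tsum_zero with k
  rw [if_neg]
  exact not_le.mpr (lt_of_lt_of_le h (ht.monotone (by omega)))

private lemma aux_one {t : ℕ → ℝ} (ht : StrictMono t) {u : ℝ} (h1 : t 1 ≤ u) (h2 : u < t 2) :
    (∑' k : ℕ, if t (k+1) ≤ u then (1:ℝ) else 0) = 1 := by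
  have : (fun k : ℕ => if t (k+1) ≤ u then (1:ℝ) else 0)
      = fun k : ℕ => if k = 0 then (1:ℝ) else 0 := by
    funext k
    cases k with
    | zero => simp [h1]
    | succ n =>
      rw [if_neg (not_le.mpr (lt_of_lt_of_le h2 (ht.monotone (by omega)))), if_neg (by omega)]
  rw [this, tsum_ite_eq 0 (fun _ => (1:ℝ))]

private lemma aux_two {t : ℕ → ℝ} (ht : StrictMono t) (htop : Tendsto t atTop atTop)
    {u : ℝ} (h : t 2 ≤ u) :
    2 ≤ ∑' k : ℕ, if t (k+1) ≤ u then (1:ℝ) else 0 := by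
  have hs := aux_summable htop u
  have := Summable.sum_le_tsum (Finset.range 2) (fun k _ => by split <;> norm_num) hs
  refine le_trans (le_of_eq ?_) this
  rw [Finset.sum_range_succ, Finset.sum_range_one]
  rw [if_pos (le_trans (ht (by omega)).le h), if_pos h]
  norm_num

private lemma if_meas {Ω : Type*} [MeasurableSpace Ω] (p : Ω → Prop) [DecidablePred p]
    (hp : MeasurableSet {ω | p ω}) : Measurable (fun ω => if p ω then (1:ℝ) else 0) :=
  Measurable.ite hp measurable_const measurable_const

private lemma if_int {Ω : Type*} [MeasurableSpace Ω] (P : Measure Ω)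
    [IsFiniteMeasure P] (p : Ω → Prop) [DecidablePred p]
    (hp : MeasurableSet {ω | p ω}) :
    Integrable (fun ω => if p ω then (1:ℝ) else 0) P := by
  refine Integrable.mono' (integrable_const 1)
    (if_meas p hp).aestronglyMeasurable (Eventually.of_forall fun ω => ?_)
  rw [Real.norm_eq_abs]
  split <;> norm_num

private lemma if_integral {Ω : Type*} [MeasurableSpace Ω] (P : Measure Ω)
    [IsFiniteMeasure P] (p : Ω → Prop) [DecidablePred p]
    (hp : MeasurableSet {ω | p ω}) :
    ∫ ω, (if p ω then (1:ℝ) else 0) ∂P = (P {ω | p ω}).toReal := by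
  have h : (fun ω => if p ω then (1:ℝ) else 0)
      = Set.indicator {ω | p ω} (fun _ => (1:ℝ)) := by
    funext ω
    by_cases hω : p ω <;> simp [Set.indicator_apply, Set.mem_setOf_eq, hω]
  rw [h, integral_indicator_const (1:ℝ) hp, smul_eq_mul, mul_one]
  rfl

set_option maxHeartbeats 2000000 in
/-- For the unit-jump counting process `γ(u) = ∑_{k≥1} 1(τ_k ≤ u)` with
`P(τ_1 ≤ u) = u(1+o(1))`, `E[γ(u)² 1(τ_2 ≤ u)] = O(u²)`,
`E[γ(v) 1(τ_1 ≤ u, τ_2 ≤ v)] = o(u)` uniformly for `0 ≤ u ≤ v → 0`, and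
`E γ(v)² = O(v)`, the covariance satisfies
`Cov(γ(u),γ(v)) = (u ∧ v)(1+o(1))` as `u, v → 0⁺`. -/
theorem counting_seed_covariance
    {Ω : Type*} [MeasurableSpace Ω] (P : Measure Ω) [IsProbabilityMeasure P]
    (τ : ℕ → Ω → ℝ) (γ : ℝ → Ω → ℝ)
    (hτmeas : ∀ k, Measurable (τ k))
    (hτ : ∀ᵐ ω ∂P, StrictMono (fun k => τ k ω) ∧ 0 < τ 1 ω ∧
      Tendsto (fun k => τ k ω) atTop atTop)
    (hγ : ∀ u ω, γ u ω = ∑' k : ℕ, if τ (k + 1) ω ≤ u then (1 : ℝ) else 0)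
    (hL2 : ∀ u : ℝ, MemLp (γ u) 2 P)
    (h1 : (fun u : ℝ => (P {ω | τ 1 ω ≤ u}).toReal - u) =o[𝓝[>] 0] (fun u => u))
    (h2 : (fun u : ℝ => ∫ ω, (γ u ω) ^ 2 * (if τ 2 ω ≤ u then (1 : ℝ) else 0) ∂P)
      =O[𝓝[>] 0] (fun u => u ^ 2))
    (h3 : ∀ ε > 0, ∃ η > 0, ∀ u v : ℝ, 0 ≤ u → u ≤ v → v < η →
      |∫ ω, γ v ω * (if τ 1 ω ≤ u ∧ τ 2 ω ≤ v then (1 : ℝ) else 0) ∂P| ≤ ε * u)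
    (h4 : ∃ C > 0, ∃ v₀ > 0, ∀ v : ℝ, 0 < v → v ≤ v₀ →
      ∫ ω, (γ v ω) ^ 2 ∂P ≤ C * v) :
    ∀ ε > 0, ∃ η > 0, ∀ u v : ℝ, 0 < u → 0 < v → u < η → v < η →
      |((∫ ω, γ u ω * γ v ω ∂P) - (∫ ω, γ u ω ∂P) * (∫ ω, γ v ω ∂P)) - min u v|
        ≤ ε * min u v := by
  intro ε hε
  -- basic integrability / measurability facts
  have aesm : ∀ w : ℝ, AEStronglyMeasurable (γ w) P := fun w => (hL2 w).aestronglyMeasurable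
  have int_γ : ∀ w : ℝ, Integrable (γ w) P := fun w => (hL2 w).integrable one_le_two
  have int_sq : ∀ w : ℝ, Integrable (fun ω => γ w ω ^ 2) P := fun w => (hL2 w).integrable_sq
  have aesm_sq : ∀ w : ℝ, AEStronglyMeasurable (fun ω => γ w ω ^ 2) P := by
    intro w
    have := (aesm w).mul (aesm w)
    simp only [pow_two]; exact this
  have int_mul : ∀ w w' : ℝ, Integrable (fun ω => γ w ω * γ w' ω) P := by
    intro w w'
    have hg : Integrable (fun ω => (γ w ω ^ 2 + γ w' ω ^ 2)/2) P :=
      ((int_sq w).add (int_sq w')).div_const 2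
    refine Integrable.mono' hg ((aesm w).mul (aesm w')) (Eventually.of_forall fun ω => ?_)
    rw [Real.norm_eq_abs, abs_mul]
    nlinarith [sq_nonneg (|γ w ω| - |γ w' ω|), sq_abs (γ w ω), sq_abs (γ w' ω),
      abs_nonneg (γ w ω), abs_nonneg (γ w' ω)]
  -- a.e. pointwise properties of γ
  have hprop : ∀ᵐ ω ∂P, (∀ w : ℝ, 0 ≤ γ w ω) ∧ (∀ w : ℝ, w < τ 1 ω → γ w ω = 0) ∧
      (∀ w : ℝ, τ 1 ω ≤ w → w < τ 2 ω → γ w ω = 1) ∧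
      (∀ w : ℝ, τ 2 ω ≤ w → 2 ≤ γ w ω) := by
    filter_upwards [hτ] with ω hω
    obtain ⟨hm, _, htop⟩ := hω
    refine ⟨fun w => ?_, fun w hw => ?_, fun w hw1 hw2 => ?_, fun w hw => ?_⟩
    · rw [hγ w ω]; exact aux_nonneg (fun k => τ k ω) w
    · rw [hγ w ω]; exact aux_zero hm hw
    · rw [hγ w ω]; exact aux_one hm hw1 hw2
    · rw [hγ w ω]; exact aux_two hm htop hw
  -- measurable sets used repeatedly
  have msA : ∀ w : ℝ, MeasurableSet {ω | τ 1 ω ≤ w} :=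
    fun w => measurableSet_le (hτmeas 1) measurable_const
  have msB : ∀ w : ℝ, MeasurableSet {ω | τ 2 ω ≤ w} :=
    fun w => measurableSet_le (hτmeas 2) measurable_const
  have msAB : ∀ w w' : ℝ, MeasurableSet {ω | τ 1 ω ≤ w ∧ τ 2 ω ≤ w'} := by
    intro w w'
    exact (msA w).inter (msB w')
  -- extract constants
  obtain ⟨C, hC, v₀, hv₀, h4'⟩ := h4
  obtain ⟨K₀, hK₀⟩ := h2.isBigOWith
  rw [IsBigOWith, eventually_nhdsWithin_iff, Metric.eventually_nhds_iff] at hK₀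
  obtain ⟨δ₂, hδ₂, hKb⟩ := hK₀
  set K : ℝ := max K₀ 1 with hKdef
  have hK : 0 < K := lt_of_lt_of_le one_pos (le_max_right _ _)
  have hQ : ∀ w : ℝ, 0 < w → w < δ₂ →
      ∫ ω, (γ w ω) ^ 2 * (if τ 2 ω ≤ w then (1:ℝ) else 0) ∂P ≤ K * w ^ 2 := by
    intro w hw hwδ
    have hd : dist w 0 < δ₂ := by
      rw [Real.dist_eq, sub_zero, abs_of_pos hw]; exact hwδ
    have hb := hKb hd (Set.mem_Ioi.mpr hw)
    rw [Real.norm_eq_abs, Real.norm_eq_abs] at hb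
    calc ∫ ω, (γ w ω) ^ 2 * (if τ 2 ω ≤ w then (1:ℝ) else 0) ∂P
        ≤ |∫ ω, (γ w ω) ^ 2 * (if τ 2 ω ≤ w then (1:ℝ) else 0) ∂P| := le_abs_self _
      _ ≤ K₀ * |w ^ 2| := hb
      _ ≤ K * w ^ 2 := by
          rw [abs_of_nonneg (sq_nonneg w)]
          exact mul_le_mul_of_nonneg_right (le_max_left _ _) (sq_nonneg w)
  set c₁ : ℝ := min (ε/5) (1/2) with hc₁def
  have hc₁ : 0 < c₁ := lt_min (by linarith) (by norm_num)
  have h1' := h1.def hc₁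
  rw [eventually_nhdsWithin_iff, Metric.eventually_nhds_iff] at h1'
  obtain ⟨δ₁, hδ₁, hPb⟩ := h1'
  have hP1 : ∀ w : ℝ, 0 < w → w < δ₁ → |(P {ω | τ 1 ω ≤ w}).toReal - w| ≤ c₁ * w := by
    intro w hw hwδ
    have hd : dist w 0 < δ₁ := by
      rw [Real.dist_eq, sub_zero, abs_of_pos hw]; exact hwδ
    have hb := hPb hd (Set.mem_Ioi.mpr hw)
    rwa [Real.norm_eq_abs, Real.norm_eq_abs, abs_of_pos hw] at hb
  obtain ⟨η₃, hη₃, hI2b⟩ := h3 (ε/5) (by linarith)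
  -- integrability of γ² times indicator
  have int_sqind : ∀ w w' : ℝ, Integrable
      (fun ω => (γ w ω) ^ 2 * (if τ 2 ω ≤ w' then (1:ℝ) else 0)) P := by
    intro w w'
    refine Integrable.mono' (int_sq w)
      ((aesm_sq w).mul (if_meas _ (msB w')).aestronglyMeasurable)
      (Eventually.of_forall fun ω => ?_)
    rw [Real.norm_eq_abs]
    by_cases h : τ 2 ω ≤ w'
    · rw [if_pos h, mul_one, abs_of_nonneg (sq_nonneg _)]
    · rw [if_neg h, mul_zero, abs_zero]; exact sq_nonneg _
  -- expectation bounds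
  have hEnn : ∀ w : ℝ, 0 ≤ ∫ ω, γ w ω ∂P := by
    intro w
    refine integral_nonneg_of_ae ?_
    filter_upwards [hprop] with ω hω
    exact hω.1 w
  have hEub : ∀ w : ℝ, 0 < w → w < δ₁ → w < δ₂ → w ≤ 1/(2*K) → ∫ ω, γ w ω ∂P ≤ 2 * w := by
    intro w hw hwδ₁ hwδ₂ hwK
    have hmono : ∫ ω, γ w ω ∂P ≤ ∫ ω, ((if τ 1 ω ≤ w then (1:ℝ) else 0)
        + (γ w ω) ^ 2 * (if τ 2 ω ≤ w then (1:ℝ) else 0)) ∂P := by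
      refine integral_mono_ae (int_γ w) ((if_int P _ (msA w)).add (int_sqind w w)) ?_
      filter_upwards [hτ, hprop] with ω hω hp
      obtain ⟨hm, hpos, htop⟩ := hω
      by_cases hA : τ 1 ω ≤ w
      · by_cases hB : τ 2 ω ≤ w
        · have h2le := hp.2.2.2 w hB
          rw [if_pos hA, if_pos hB, mul_one]
          nlinarith
        · rw [hp.2.2.1 w hA (not_le.mp hB), if_pos hA, if_neg hB, mul_zero]
          norm_num
      · have hB : ¬ τ 2 ω ≤ w := fun h => hA (le_trans (hm (by omega : (1:ℕ) < 2)).le h)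
        rw [hp.2.1 w (not_le.mp hA), if_neg hA, if_neg hB, mul_zero, add_zero]
    have stw : ∫ ω, ((if τ 1 ω ≤ w then (1:ℝ) else 0)
          + (γ w ω) ^ 2 * (if τ 2 ω ≤ w then (1:ℝ) else 0)) ∂P
        = (∫ ω, (if τ 1 ω ≤ w then (1:ℝ) else 0) ∂P)
          + ∫ ω, (γ w ω) ^ 2 * (if τ 2 ω ≤ w then (1:ℝ) else 0) ∂P :=
      integral_add (if_int P _ (msA w)) (int_sqind w w)
    rw [stw, if_integral P _ (msA w)] at hmono
    have hq := hQ w hw hwδ₂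
    have hp1 := hP1 w hw hwδ₁
    have hcc : c₁ ≤ 1/2 := min_le_right _ _
    have hPA : (P {ω | τ 1 ω ≤ w}).toReal ≤ w + c₁ * w := by
      have := abs_le.mp hp1
      linarith [this.2]
    have hKw : K * w ^ 2 ≤ w / 2 := by
      have hKw' : K * w ≤ 1/2 := by
        calc K * w ≤ K * (1/(2*K)) := mul_le_mul_of_nonneg_left hwK hK.le
          _ = 1/2 := by field_simp
      nlinarith
    nlinarith
  -- choose η
  set s : ℝ := ε/(5*C) with hsdef
  have hs : 0 < s := by positivity
  set η : ℝ := min δ₁ (min δ₂ (min η₃ (min v₀ (min (ε*s/(5*K)) (min (1/(2*K)) (ε/20))))))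
    with hηdef
  have hηδ₁ : η ≤ δ₁ := min_le_left _ _
  have hηδ₂ : η ≤ δ₂ := le_trans (min_le_right _ _) (min_le_left _ _)
  have hηη₃ : η ≤ η₃ := le_trans (min_le_right _ _) (le_trans (min_le_right _ _) (min_le_left _ _))
  have hηv₀ : η ≤ v₀ := le_trans (min_le_right _ _) (le_trans (min_le_right _ _)
    (le_trans (min_le_right _ _) (min_le_left _ _)))
  have hηεs : η ≤ ε*s/(5*K) := le_trans (min_le_right _ _) (le_trans (min_le_right _ _)
    (le_trans (min_le_right _ _) (le_trans (min_le_right _ _) (min_le_left _ _))))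
  have hηK : η ≤ 1/(2*K) := le_trans (min_le_right _ _) (le_trans (min_le_right _ _)
    (le_trans (min_le_right _ _) (le_trans (min_le_right _ _)
      (le_trans (min_le_right _ _) (min_le_left _ _)))))
  have hηε : η ≤ ε/20 := le_trans (min_le_right _ _) (le_trans (min_le_right _ _)
    (le_trans (min_le_right _ _) (le_trans (min_le_right _ _)
      (le_trans (min_le_right _ _) (min_le_right _ _)))))
  have hη : 0 < η := by
    refine lt_min hδ₁ (lt_min hδ₂ (lt_min hη₃ (lt_min hv₀ (lt_min ?_ (lt_min ?_ ?_))))) <;>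
      positivity
  refine ⟨η, hη, ?_⟩
  -- the key one-sided estimate
  have key : ∀ u v : ℝ, 0 < u → u ≤ v → v < η →
      |((∫ ω, γ u ω * γ v ω ∂P) - (∫ ω, γ u ω ∂P) * (∫ ω, γ v ω ∂P)) - u| ≤ ε * u := by
    intro u v hu huv hvη
    have hv : 0 < v := lt_of_lt_of_le hu huv
    have huη : u < η := lt_of_le_of_lt huv hvη
    -- pointwise decomposition
    have hdec : ∀ᵐ ω ∂P, γ u ω * γ v ω =
        ((if τ 1 ω ≤ u then (1:ℝ) else 0) - (if τ 1 ω ≤ u ∧ τ 2 ω ≤ v then (1:ℝ) else 0))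
        + γ v ω * (if τ 1 ω ≤ u ∧ τ 2 ω ≤ v then (1:ℝ) else 0)
        + γ v ω * (γ u ω - 1) * (if τ 2 ω ≤ u then (1:ℝ) else 0) := by
      filter_upwards [hτ, hprop] with ω hω hp
      obtain ⟨hm, hpos, htop⟩ := hω
      by_cases hA : τ 1 ω ≤ u
      · by_cases hBu : τ 2 ω ≤ u
        · have hBv : τ 2 ω ≤ v := hBu.trans huv
          rw [if_pos hA, if_pos hBu, if_pos (And.intro hA hBv)]
          ring
        · by_cases hBv : τ 2 ω ≤ v
          · have hgu : γ u ω = 1 := hp.2.2.1 u hA (not_le.mp hBu)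
            rw [hgu, if_pos hA, if_neg hBu, if_pos (And.intro hA hBv)]
            ring
          · have hBu' : ¬ τ 2 ω ≤ u := fun h => hBv (h.trans huv)
            have hgu : γ u ω = 1 := hp.2.2.1 u hA (lt_of_le_of_lt huv (not_le.mp hBv))
            have hgv : γ v ω = 1 := hp.2.2.1 v (hA.trans huv) (not_le.mp hBv)
            rw [hgu, hgv, if_pos hA, if_neg hBu', if_neg (fun h : _ ∧ _ => hBv h.2)]
            ring
      · have hBu : ¬ τ 2 ω ≤ u := fun h => hA (le_trans (hm (by omega : (1:ℕ) < 2)).le h)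
        have hgu : γ u ω = 0 := hp.2.1 u (not_le.mp hA)
        rw [hgu, if_neg hA, if_neg (fun h : _ ∧ _ => hA h.1), if_neg hBu]
        ring
    -- integrability of the pieces
    have intf2 : Integrable
        (fun ω => γ v ω * (if τ 1 ω ≤ u ∧ τ 2 ω ≤ v then (1:ℝ) else 0)) P := by
      refine Integrable.mono' ((int_γ v).abs)
        ((aesm v).mul (if_meas _ (msAB u v)).aestronglyMeasurable)
        (Eventually.of_forall fun ω => ?_)
      rw [Real.norm_eq_abs]
      by_cases h : τ 1 ω ≤ u ∧ τ 2 ω ≤ v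
      · rw [if_pos h, mul_one]
      · rw [if_neg h, mul_zero, abs_zero]; exact abs_nonneg _
    have intf3 : Integrable
        (fun ω => γ v ω * (γ u ω - 1) * (if τ 2 ω ≤ u then (1:ℝ) else 0)) P := by
      refine Integrable.mono' ((int_mul u v).abs)
        (((aesm v).mul ((aesm u).sub aestronglyMeasurable_const)).mul
          (if_meas _ (msB u)).aestronglyMeasurable) ?_
      filter_upwards [hprop] with ω hp
      rw [Real.norm_eq_abs]
      by_cases h : τ 2 ω ≤ u
      · rw [if_pos h, mul_one]
        have h2 : 2 ≤ γ u ω := hp.2.2.2 u h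
        have h0v : 0 ≤ γ v ω := hp.1 v
        rw [abs_mul, abs_of_nonneg h0v, abs_of_nonneg (by linarith : (0:ℝ) ≤ γ u ω - 1),
          abs_of_nonneg (mul_nonneg (by linarith : (0:ℝ) ≤ γ u ω) h0v)]
        have he : γ v ω * (γ u ω - 1) = γ u ω * γ v ω - γ v ω := by ring
        linarith
      · rw [if_neg h, mul_zero, abs_zero]; exact abs_nonneg _
    -- splitting of the mixed moment
    have iA : Integrable (fun ω => if τ 1 ω ≤ u then (1:ℝ) else 0) P := if_int P _ (msA u)
    have iAB : Integrable (fun ω => if τ 1 ω ≤ u ∧ τ 2 ω ≤ v then (1:ℝ) else 0) P :=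
      if_int P _ (msAB u v)
    have i1 : Integrable (fun ω => (if τ 1 ω ≤ u then (1:ℝ) else 0)
        - (if τ 1 ω ≤ u ∧ τ 2 ω ≤ v then (1:ℝ) else 0)) P := iA.sub iAB
    have i12 : Integrable (fun ω => ((if τ 1 ω ≤ u then (1:ℝ) else 0)
        - (if τ 1 ω ≤ u ∧ τ 2 ω ≤ v then (1:ℝ) else 0))
        + γ v ω * (if τ 1 ω ≤ u ∧ τ 2 ω ≤ v then (1:ℝ) else 0)) P := i1.add intf2
    have hsplit : ∫ ω, γ u ω * γ v ω ∂P
        = (P {ω | τ 1 ω ≤ u}).toReal - (P {ω | τ 1 ω ≤ u ∧ τ 2 ω ≤ v}).toReal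
          + (∫ ω, γ v ω * (if τ 1 ω ≤ u ∧ τ 2 ω ≤ v then (1:ℝ) else 0) ∂P)
          + (∫ ω, γ v ω * (γ u ω - 1) * (if τ 2 ω ≤ u then (1:ℝ) else 0) ∂P) := by
      have st1 : ∫ ω, (((if τ 1 ω ≤ u then (1:ℝ) else 0)
            - (if τ 1 ω ≤ u ∧ τ 2 ω ≤ v then (1:ℝ) else 0))
            + γ v ω * (if τ 1 ω ≤ u ∧ τ 2 ω ≤ v then (1:ℝ) else 0))
            + γ v ω * (γ u ω - 1) * (if τ 2 ω ≤ u then (1:ℝ) else 0) ∂P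
          = (∫ ω, ((if τ 1 ω ≤ u then (1:ℝ) else 0)
            - (if τ 1 ω ≤ u ∧ τ 2 ω ≤ v then (1:ℝ) else 0))
            + γ v ω * (if τ 1 ω ≤ u ∧ τ 2 ω ≤ v then (1:ℝ) else 0) ∂P)
            + ∫ ω, γ v ω * (γ u ω - 1) * (if τ 2 ω ≤ u then (1:ℝ) else 0) ∂P :=
        integral_add i12 intf3
      have st2 : ∫ ω, ((if τ 1 ω ≤ u then (1:ℝ) else 0)
            - (if τ 1 ω ≤ u ∧ τ 2 ω ≤ v then (1:ℝ) else 0))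
            + γ v ω * (if τ 1 ω ≤ u ∧ τ 2 ω ≤ v then (1:ℝ) else 0) ∂P
          = (∫ ω, (if τ 1 ω ≤ u then (1:ℝ) else 0)
            - (if τ 1 ω ≤ u ∧ τ 2 ω ≤ v then (1:ℝ) else 0) ∂P)
            + ∫ ω, γ v ω * (if τ 1 ω ≤ u ∧ τ 2 ω ≤ v then (1:ℝ) else 0) ∂P :=
        integral_add i1 intf2
      have st3 : ∫ ω, (if τ 1 ω ≤ u then (1:ℝ) else 0)
            - (if τ 1 ω ≤ u ∧ τ 2 ω ≤ v then (1:ℝ) else 0) ∂P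
          = (∫ ω, (if τ 1 ω ≤ u then (1:ℝ) else 0) ∂P)
            - ∫ ω, (if τ 1 ω ≤ u ∧ τ 2 ω ≤ v then (1:ℝ) else 0) ∂P :=
        integral_sub iA iAB
      rw [integral_congr_ae hdec, st1, st2, st3, if_integral P _ (msA u),
        if_integral P _ (msAB u v)]
    -- bound on second piece
    have hI2 : |∫ ω, γ v ω * (if τ 1 ω ≤ u ∧ τ 2 ω ≤ v then (1:ℝ) else 0) ∂P| ≤ ε/5 * u :=
      hI2b u v hu.le huv (lt_of_lt_of_le hvη hηη₃)
    -- bound on the joint probability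
    have hPabnn : 0 ≤ (P {ω | τ 1 ω ≤ u ∧ τ 2 ω ≤ v}).toReal := ENNReal.toReal_nonneg
    have hPab : 2 * (P {ω | τ 1 ω ≤ u ∧ τ 2 ω ≤ v}).toReal ≤ ε/5 * u := by
      have hmono : ∫ ω, 2 * (if τ 1 ω ≤ u ∧ τ 2 ω ≤ v then (1:ℝ) else 0) ∂P
          ≤ ∫ ω, γ v ω * (if τ 1 ω ≤ u ∧ τ 2 ω ≤ v then (1:ℝ) else 0) ∂P := by
        refine integral_mono_ae ((if_int P _ (msAB u v)).const_mul 2) intf2 ?_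
        filter_upwards [hprop] with ω hp
        by_cases h : τ 1 ω ≤ u ∧ τ 2 ω ≤ v
        · rw [if_pos h, mul_one, mul_one]
          exact hp.2.2.2 v h.2
        · rw [if_neg h, mul_zero, mul_zero]
      rw [integral_const_mul, if_integral P _ (msAB u v)] at hmono
      calc 2 * (P {ω | τ 1 ω ≤ u ∧ τ 2 ω ≤ v}).toReal
          ≤ ∫ ω, γ v ω * (if τ 1 ω ≤ u ∧ τ 2 ω ≤ v then (1:ℝ) else 0) ∂P := hmono
        _ ≤ |∫ ω, γ v ω * (if τ 1 ω ≤ u ∧ τ 2 ω ≤ v then (1:ℝ) else 0) ∂P| := le_abs_self _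
        _ ≤ ε/5 * u := hI2
    -- bound on the cross term via AM-GM
    set t : ℝ := s * u / v with htdef
    have ht : 0 < t := by positivity
    have hptw : ∀ᵐ ω ∂P, |γ v ω * (γ u ω - 1) * (if τ 2 ω ≤ u then (1:ℝ) else 0)|
        ≤ (t * γ v ω ^ 2 + t⁻¹ * ((γ u ω) ^ 2 * (if τ 2 ω ≤ u then (1:ℝ) else 0))) / 2 := by
      filter_upwards [hprop] with ω hp
      by_cases h : τ 2 ω ≤ u
      · rw [if_pos h, mul_one, mul_one]
        have h2 : 2 ≤ γ u ω := hp.2.2.2 u h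
        have h0v : 0 ≤ γ v ω := hp.1 v
        rw [abs_mul, abs_of_nonneg h0v, abs_of_nonneg (by linarith : (0:ℝ) ≤ γ u ω - 1)]
        have h2' : γ v ω * γ u ω ≤ (t * γ v ω ^ 2 + t⁻¹ * γ u ω ^ 2) / 2 := by
          rw [le_div_iff₀ (by norm_num : (0:ℝ) < 2), ← sub_nonneg]
          have he : t * γ v ω ^ 2 + t⁻¹ * γ u ω ^ 2 - γ v ω * γ u ω * 2
              = (t * γ v ω - γ u ω) ^ 2 * t⁻¹ := by
            field_simp
            ring
          rw [he]
          positivity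
        have h1' : γ v ω * (γ u ω - 1) ≤ γ v ω * γ u ω :=
          mul_le_mul_of_nonneg_left (by linarith) h0v
        linarith
      · rw [if_neg h, mul_zero, mul_zero, abs_zero, mul_zero, add_zero]
        positivity
    have intg : Integrable (fun ω => (t * γ v ω ^ 2
        + t⁻¹ * ((γ u ω) ^ 2 * (if τ 2 ω ≤ u then (1:ℝ) else 0))) / 2) P :=
      (((int_sq v).const_mul t).add ((int_sqind u u).const_mul t⁻¹)).div_const 2
    have hI3 : |∫ ω, γ v ω * (γ u ω - 1) * (if τ 2 ω ≤ u then (1:ℝ) else 0) ∂P| ≤ ε/5 * u := by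
      have habs : |∫ ω, γ v ω * (γ u ω - 1) * (if τ 2 ω ≤ u then (1:ℝ) else 0) ∂P|
          ≤ ∫ ω, |γ v ω * (γ u ω - 1) * (if τ 2 ω ≤ u then (1:ℝ) else 0)| ∂P := by
        have hn := norm_integral_le_integral_norm
          (fun ω => γ v ω * (γ u ω - 1) * (if τ 2 ω ≤ u then (1:ℝ) else 0)) (μ := P)
        simpa [Real.norm_eq_abs] using hn
      have hmono2 : ∫ ω, |γ v ω * (γ u ω - 1) * (if τ 2 ω ≤ u then (1:ℝ) else 0)| ∂P
          ≤ ∫ ω, (t * γ v ω ^ 2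
            + t⁻¹ * ((γ u ω) ^ 2 * (if τ 2 ω ≤ u then (1:ℝ) else 0))) / 2 ∂P :=
        integral_mono_ae intf3.abs intg hptw
      have hrhs : ∫ ω, (t * γ v ω ^ 2
            + t⁻¹ * ((γ u ω) ^ 2 * (if τ 2 ω ≤ u then (1:ℝ) else 0))) / 2 ∂P
          = (t * (∫ ω, γ v ω ^ 2 ∂P)
            + t⁻¹ * (∫ ω, (γ u ω) ^ 2 * (if τ 2 ω ≤ u then (1:ℝ) else 0) ∂P)) / 2 := by
        have ha : Integrable (fun ω => t * γ v ω ^ 2) P := (int_sq v).const_mul t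
        have hb : Integrable (fun ω => t⁻¹ * ((γ u ω) ^ 2
            * (if τ 2 ω ≤ u then (1:ℝ) else 0))) P := (int_sqind u u).const_mul t⁻¹
        have st : ∫ ω, t * γ v ω ^ 2 + t⁻¹ * ((γ u ω) ^ 2
              * (if τ 2 ω ≤ u then (1:ℝ) else 0)) ∂P
            = (∫ ω, t * γ v ω ^ 2 ∂P) + ∫ ω, t⁻¹ * ((γ u ω) ^ 2
              * (if τ 2 ω ≤ u then (1:ℝ) else 0)) ∂P := integral_add ha hb
        rw [integral_div, st, integral_const_mul, integral_const_mul]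
      have hS : ∫ ω, γ v ω ^ 2 ∂P ≤ C * v := h4' v hv (le_of_lt (lt_of_lt_of_le hvη hηv₀))
      have hQu : ∫ ω, (γ u ω) ^ 2 * (if τ 2 ω ≤ u then (1:ℝ) else 0) ∂P ≤ K * u ^ 2 :=
        hQ u hu (lt_of_lt_of_le huη hηδ₂)
      have e1 : t * (C * v) = ε/5 * u := by
        rw [htdef, hsdef]
        field_simp
      have e2 : t⁻¹ * (K * u ^ 2) ≤ ε/5 * u := by
        have hvs : v ≤ ε*s/(5*K) := le_of_lt (lt_of_lt_of_le hvη hηεs)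
        have htiv : t⁻¹ = v / (s * u) := by rw [htdef, inv_div]
        have he : t⁻¹ * (K * u ^ 2) = (K * v / s) * u := by
          rw [htiv]
          field_simp
        rw [he]
        have hle : K * v / s ≤ ε/5 := by
          rw [div_le_iff₀ hs]
          calc K * v ≤ K * (ε*s/(5*K)) := mul_le_mul_of_nonneg_left hvs hK.le
            _ = ε/5 * s := by field_simp
        exact mul_le_mul_of_nonneg_right hle hu.le
      have b1 : t * (∫ ω, γ v ω ^ 2 ∂P) ≤ ε/5 * u :=
        le_trans (mul_le_mul_of_nonneg_left hS ht.le) (le_of_eq e1)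
      have b2 : t⁻¹ * (∫ ω, (γ u ω) ^ 2 * (if τ 2 ω ≤ u then (1:ℝ) else 0) ∂P) ≤ ε/5 * u :=
        le_trans (mul_le_mul_of_nonneg_left hQu (inv_pos.mpr ht).le) e2
      rw [hrhs] at hmono2
      linarith
    -- expectation bounds at u and v
    have hPA := hP1 u hu (lt_of_lt_of_le huη hηδ₁)
    have hc₁ε : c₁ * u ≤ ε/5 * u := mul_le_mul_of_nonneg_right (min_le_left _ _) hu.le
    have hEu : ∫ ω, γ u ω ∂P ≤ 2 * u := hEub u hu (lt_of_lt_of_le huη hηδ₁)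
      (lt_of_lt_of_le huη hηδ₂) (le_trans huη.le hηK)
    have hEv : ∫ ω, γ v ω ∂P ≤ 2 * v := hEub v hv (lt_of_lt_of_le hvη hηδ₁)
      (lt_of_lt_of_le hvη hηδ₂) (le_trans hvη.le hηK)
    have hEprodnn : 0 ≤ (∫ ω, γ u ω ∂P) * (∫ ω, γ v ω ∂P) := mul_nonneg (hEnn u) (hEnn v)
    have hEprod : (∫ ω, γ u ω ∂P) * (∫ ω, γ v ω ∂P) ≤ ε/5 * u := by
      have hb : (∫ ω, γ u ω ∂P) * (∫ ω, γ v ω ∂P) ≤ (2*u) * (2*v) :=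
        mul_le_mul hEu hEv (hEnn v) (by linarith)
      have hv20 : v ≤ ε/20 := le_trans hvη.le hηε
      nlinarith
    have hεu : 0 ≤ ε * u := by positivity
    rw [hsplit]
    obtain ⟨hPAl, hPAr⟩ := abs_le.mp hPA
    obtain ⟨h2l, h2r⟩ := abs_le.mp hI2
    obtain ⟨h3l, h3r⟩ := abs_le.mp hI3
    rw [abs_le]
    constructor <;> linarith
  intro u v hu hv huη hvη
  rcases le_total u v with h | h
  · rw [min_eq_left h]
    exact key u v hu h hvη
  · rw [min_eq_right h]
    have hsym : ∫ ω, γ u ω * γ v ω ∂P = ∫ ω, γ v ω * γ u ω ∂P :=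
      integral_congr_ae (Eventually.of_forall fun ω => mul_comm _ _)
    rw [hsym, mul_comm (∫ ω, γ u ω ∂P) (∫ ω, γ v ω ∂P)]
    exact key v u hv h huη
end

section
/- Let $\tau_1>0$ be a random variable with $\mathbb{P}(\tau_1\le u)=u(1+o(1))$ as $u\to 0$, and let $a_j>0$ satisfy $a_j\sim c_0 j^{-\alpha}$ with $c_0>0$, $1<\alpha<2$. Then $Z^*=\#\{j\ge 0: a_j\ge \tau_1\}$ has regularly varying tail: $\mathbb{P}(Z^*>y)=c_0 y^{-\alpha}(1+o(1))$ as $y\to\infty$. -/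
open Filter Topology MeasureTheory

private lemma tendsto_aux_ratio (α K c : ℝ) (hα : 0 < α) :
    Tendsto (fun y : ℝ => y ^ α * (K * (y + c) ^ (-α))) atTop (𝓝 K) := by
  have h1 : Tendsto (fun y : ℝ => y + c) atTop atTop :=
    tendsto_atTop_add_const_right _ c tendsto_id
  have h2 : Tendsto (fun y : ℝ => y / (y + c)) atTop (𝓝 1) := by
    have h3 : Tendsto (fun y : ℝ => 1 + (-c) / (y + c)) atTop (𝓝 (1 + 0)) :=
      tendsto_const_nhds.add (tendsto_const_nhds.div_atTop h1)
    rw [add_zero] at h3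
    apply h3.congr'
    filter_upwards [h1.eventually_gt_atTop 0] with y hy
    field_simp
    ring
  have h4 : Tendsto (fun y : ℝ => (y / (y + c)) ^ α) atTop (𝓝 1) := by
    have := h2.rpow (tendsto_const_nhds (x := α)) (Or.inl one_ne_zero)
    simpa using this
  have h5 : Tendsto (fun y : ℝ => K * (y / (y + c)) ^ α) atTop (𝓝 (K * 1)) :=
    h4.const_mul K
  rw [mul_one] at h5
  apply h5.congr'
  filter_upwards [h1.eventually_gt_atTop 0, eventually_ge_atTop (0 : ℝ)] with y hy hy0
  rw [Real.div_rpow hy0 hy.le, Real.rpow_neg hy.le]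
  ring

private lemma tendsto_aux_u (α K c : ℝ) (hα : 0 < α) (hK : 0 < K) :
    Tendsto (fun y : ℝ => K * (y + c) ^ (-α)) atTop (𝓝[>] 0) := by
  have h1 : Tendsto (fun y : ℝ => y + c) atTop atTop :=
    tendsto_atTop_add_const_right _ c tendsto_id
  rw [tendsto_nhdsWithin_iff]
  constructor
  · have := ((tendsto_rpow_neg_atTop hα).comp h1).const_mul K
    simpa using this
  · filter_upwards [h1.eventually_gt_atTop 0] with y hy
    exact Set.mem_Ioi.mpr (mul_pos hK (Real.rpow_pos_of_pos hy _))

private lemma aux_upper {a : ℕ → ℝ} {α : ℝ} (hα : 0 < α) {C : ℝ} (hC : 0 < C) (J : ℕ)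
    (haJ : ∀ j, J ≤ j → a j ≤ C * (j : ℝ) ^ (-α))
    {t y : ℝ} (ht : 0 < t) (hy : (J : ℝ) + 3 ≤ y)
    (hty : C * (y + (-(J : ℝ) - 2)) ^ (-α) < t) :
    (∑' j : ℕ, if t ≤ a j then (1 : ℝ) else 0) ≤ y := by
  set m := (C / t) ^ (1 / α) with hm
  have hm0 : 0 ≤ m := Real.rpow_nonneg (by positivity) _
  set n := J + ⌈m⌉₊ + 1 with hn
  have key : ∀ j : ℕ, j ∉ Finset.range n → (if t ≤ a j then (1 : ℝ) else 0) = 0 := by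
    intro j hj
    rw [Finset.mem_range, not_lt] at hj
    rw [if_neg]
    intro hta
    have hjJ : J ≤ j := by omega
    have hj1 : (1 : ℝ) ≤ (j : ℝ) := by exact_mod_cast (by omega : 1 ≤ j)
    have hjR : (0 : ℝ) < (j : ℝ) := lt_of_lt_of_le one_pos hj1
    have hp : 0 < (j : ℝ) ^ α := Real.rpow_pos_of_pos hjR _
    have h1 : t ≤ C * ((j : ℝ) ^ α)⁻¹ := by
      have := le_trans hta (haJ j hjJ)
      rwa [Real.rpow_neg hjR.le] at this
    have h2 : (j : ℝ) ^ α ≤ C / t := by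
      rw [le_div_iff₀ ht]
      nlinarith [mul_inv_cancel₀ hp.ne']
    have h3 : (j : ℝ) ≤ m := by
      have h4 : ((j : ℝ) ^ α) ^ (1 / α) ≤ (C / t) ^ (1 / α) :=
        Real.rpow_le_rpow hp.le h2 (by positivity)
      rwa [← Real.rpow_mul hjR.le, mul_one_div_cancel hα.ne', Real.rpow_one] at h4
    have h5 : (⌈m⌉₊ : ℝ) + 1 ≤ (j : ℝ) := by exact_mod_cast (by omega : ⌈m⌉₊ + 1 ≤ j)
    have h6 : m ≤ (⌈m⌉₊ : ℝ) := Nat.le_ceil m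
    linarith
  have hsum : (∑' j : ℕ, if t ≤ a j then (1 : ℝ) else 0)
      = ∑ j ∈ Finset.range n, (if t ≤ a j then (1 : ℝ) else 0) := tsum_eq_sum key
  have hx : (0 : ℝ) < y + (-(J : ℝ) - 2) := by linarith
  have hxp : 0 < (y + (-(J : ℝ) - 2)) ^ α := Real.rpow_pos_of_pos hx _
  have h5 : C / t < (y + (-(J : ℝ) - 2)) ^ α := by
    rw [Real.rpow_neg hx.le] at hty
    rw [div_lt_iff₀ ht]
    nlinarith [mul_inv_cancel₀ hxp.ne']
  have hmx : m < y + (-(J : ℝ) - 2) := by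
    have h6 : (C / t) ^ (1 / α) < ((y + (-(J : ℝ) - 2)) ^ α) ^ (1 / α) :=
      Real.rpow_lt_rpow (by positivity) h5 (by positivity)
    rwa [← Real.rpow_mul hx.le, mul_one_div_cancel hα.ne', Real.rpow_one] at h6
  have hceil : (⌈m⌉₊ : ℝ) < m + 1 := Nat.ceil_lt_add_one hm0
  calc (∑' j : ℕ, if t ≤ a j then (1 : ℝ) else 0)
      = ∑ j ∈ Finset.range n, (if t ≤ a j then (1 : ℝ) else 0) := hsum
    _ ≤ ∑ _j ∈ Finset.range n, (1 : ℝ) :=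
        Finset.sum_le_sum (fun j _ => by split <;> norm_num)
    _ = (n : ℝ) := by simp
    _ ≤ y := by
        have : (n : ℝ) = (J : ℝ) + (⌈m⌉₊ : ℝ) + 1 := by rw [hn]; push_cast; ring
        rw [this]; linarith

private lemma aux_lower {a : ℕ → ℝ} {α : ℝ} (hα : 0 < α) {C : ℝ} (hC : 0 < C)
    (ha0 : Tendsto a atTop (𝓝 0)) (J : ℕ) (hJ : 1 ≤ J)
    (haJ : ∀ j, J ≤ j → C * (j : ℝ) ^ (-α) ≤ a j)
    {t y : ℝ} (ht : 0 < t) (hy : 0 ≤ y)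
    (hty : t ≤ C * (y + (J : ℝ) + 2) ^ (-α)) :
    y < ∑' j : ℕ, if t ≤ a j then (1 : ℝ) else 0 := by
  obtain ⟨N, hN⟩ := eventually_atTop.mp (ha0.eventually (gt_mem_nhds ht))
  have hsum : Summable (fun j : ℕ => if t ≤ a j then (1 : ℝ) else 0) := by
    apply summable_of_ne_finset_zero (s := Finset.range N)
    intro j hj
    rw [Finset.mem_range, not_lt] at hj
    rw [if_neg (not_le.mpr (hN j hj))]
  set n := ⌊y⌋₊ + J + 2 with hn
  have hone : ∀ j ∈ Finset.Ico J n, (if t ≤ a j then (1 : ℝ) else 0) = 1 := by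
    intro j hj
    rw [Finset.mem_Ico] at hj
    rw [if_pos]
    have hj1 : (1 : ℝ) ≤ (j : ℝ) := by exact_mod_cast le_trans hJ hj.1
    have hj0 : (0 : ℝ) < (j : ℝ) := lt_of_lt_of_le one_pos hj1
    have hx : (0 : ℝ) < y + (J : ℝ) + 2 := by
      have : (0 : ℝ) ≤ (J : ℝ) := Nat.cast_nonneg J
      linarith
    have hjy : (j : ℝ) ≤ y + (J : ℝ) + 2 := by
      have h1 : (j : ℝ) ≤ (n : ℝ) := by exact_mod_cast hj.2.le
      have h2 : (n : ℝ) = (⌊y⌋₊ : ℝ) + (J : ℝ) + 2 := by rw [hn]; push_cast; ring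
      have h3 : (⌊y⌋₊ : ℝ) ≤ y := Nat.floor_le hy
      linarith
    have hmono : (y + (J : ℝ) + 2) ^ (-α) ≤ (j : ℝ) ^ (-α) := by
      rw [Real.rpow_neg hx.le, Real.rpow_neg hj0.le]
      have h1 : (j : ℝ) ^ α ≤ (y + (J : ℝ) + 2) ^ α :=
        Real.rpow_le_rpow hj0.le hjy hα.le
      have h2 : 0 < (j : ℝ) ^ α := Real.rpow_pos_of_pos hj0 _
      exact inv_anti₀ h2 h1
    calc t ≤ C * (y + (J : ℝ) + 2) ^ (-α) := hty
      _ ≤ C * (j : ℝ) ^ (-α) := mul_le_mul_of_nonneg_left hmono hC.le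
      _ ≤ a j := haJ j hj.1
  have hcard : ∑ j ∈ Finset.Ico J n, (if t ≤ a j then (1 : ℝ) else 0) = ((n - J : ℕ) : ℝ) := by
    rw [Finset.sum_congr rfl hone, Finset.sum_const, Nat.card_Ico]
    simp
  have hle : ∑ j ∈ Finset.Ico J n, (if t ≤ a j then (1 : ℝ) else 0)
      ≤ ∑' j : ℕ, if t ≤ a j then (1 : ℝ) else 0 :=
    Summable.sum_le_tsum _ (fun j _ => by split <;> norm_num) hsum
  have hlt : y < ((n - J : ℕ) : ℝ) := by
    have h1 : n - J = ⌊y⌋₊ + 2 := by omega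
    rw [h1]
    push_cast
    have := Nat.lt_floor_add_one y
    linarith
  linarith [hcard ▸ hle]

/-- Regularly varying tail of `Z* = #{j ≥ 0 : a_j ≥ τ₁}`: if
`P(τ₁ ≤ u) = u(1+o(1))` as `u → 0⁺`, `τ₁ > 0` a.s., and `a_j ∼ c₀ j^{-α}` with
`c₀ > 0`, `1 < α < 2`, then `P(Z* > y) = c₀ y^{-α}(1+o(1))` as `y → ∞`. -/
theorem Zstar_regular_tail
    {Ω : Type*} [MeasurableSpace Ω] (P : Measure Ω) [IsProbabilityMeasure P]
    (τ : Ω → ℝ) (hτmeas : Measurable τ) (hτpos : ∀ᵐ ω ∂P, 0 < τ ω)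
    (hτ : (fun u : ℝ => (P {ω | τ ω ≤ u}).toReal - u) =o[𝓝[>] 0] (fun u => u))
    (a : ℕ → ℝ) (hapos : ∀ j, 0 < a j) (c₀ α : ℝ) (hc₀ : 0 < c₀)
    (hα : 1 < α) (hα2 : α < 2)
    (ha : Filter.Tendsto (fun j : ℕ => a j * (j : ℝ) ^ α) atTop (𝓝 c₀)) :
    Tendsto (fun y : ℝ =>
        y ^ α * (P {ω | (y : ℝ) < ∑' j : ℕ, if τ ω ≤ a j then (1 : ℝ) else 0}).toReal)
      atTop (𝓝 c₀) := by
  have hα0 : 0 < α := lt_trans one_pos hα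
  set g : ℝ → ℝ := fun u => (P {ω | τ ω ≤ u}).toReal with hg
  -- null set of nonpositive τ
  have hnull : P {ω | τ ω ≤ 0} = 0 := by
    have h := ae_iff.mp hτpos
    have : {ω | τ ω ≤ 0} = {ω | ¬ 0 < τ ω} := by ext ω; simp [not_lt]
    rw [this]; exact h
  -- a_j → 0
  have hpow : Tendsto (fun j : ℕ => ((j : ℝ)) ^ α) atTop atTop :=
    (tendsto_rpow_atTop hα0).comp tendsto_natCast_atTop_atTop
  have ha0 : Tendsto a atTop (𝓝 0) := by
    have h := ha.div_atTop hpow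
    apply h.congr'
    filter_upwards [eventually_ge_atTop 1] with j hj
    have hjR : (0 : ℝ) < (j : ℝ) := by exact_mod_cast Nat.lt_of_lt_of_le Nat.zero_lt_one hj
    have : (0 : ℝ) < (j : ℝ) ^ α := Real.rpow_pos_of_pos hjR _
    field_simp
  rw [Metric.tendsto_nhds]
  intro ε hε
  set δ := min (ε / (4 * c₀)) (1 / 2) with hδ
  have hδ0 : 0 < δ := lt_min (by positivity) (by norm_num)
  have hδhalf : δ ≤ 1 / 2 := min_le_right _ _
  have h4c : 4 * c₀ * δ ≤ ε := by
    have h := min_le_left (ε / (4 * c₀)) (1 / 2)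
    rw [le_div_iff₀ (by positivity : (0:ℝ) < 4 * c₀)] at h
    linarith
  -- get J
  obtain ⟨J₀, hJ₀⟩ := eventually_atTop.mp (Metric.tendsto_nhds.mp ha (δ * c₀) (by positivity))
  set J := max J₀ 1 with hJdef
  have hJ1 : 1 ≤ J := le_max_right _ _
  have haU : ∀ j, J ≤ j → a j ≤ ((1 + δ) * c₀) * (j : ℝ) ^ (-α) := by
    intro j hj
    have hj1 : (1 : ℝ) ≤ (j : ℝ) := by
      exact_mod_cast le_trans hJ1 hj
    have hjR : (0 : ℝ) < (j : ℝ) := lt_of_lt_of_le one_pos hj1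
    have hd := hJ₀ j (le_trans (le_max_left _ _) hj)
    rw [Real.dist_eq, abs_lt] at hd
    have h1 : a j * (j : ℝ) ^ α ≤ (1 + δ) * c₀ := by linarith
    have hp : 0 < (j : ℝ) ^ α := Real.rpow_pos_of_pos hjR _
    have hq : 0 < (j : ℝ) ^ (-α) := Real.rpow_pos_of_pos hjR _
    have hpq : (j : ℝ) ^ α * (j : ℝ) ^ (-α) = 1 := by
      rw [← Real.rpow_add hjR]; simp
    nlinarith
  have haL : ∀ j, J ≤ j → ((1 - δ) * c₀) * (j : ℝ) ^ (-α) ≤ a j := by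
    intro j hj
    have hj1 : (1 : ℝ) ≤ (j : ℝ) := by
      exact_mod_cast le_trans hJ1 hj
    have hjR : (0 : ℝ) < (j : ℝ) := lt_of_lt_of_le one_pos hj1
    have hd := hJ₀ j (le_trans (le_max_left _ _) hj)
    rw [Real.dist_eq, abs_lt] at hd
    have h1 : (1 - δ) * c₀ ≤ a j * (j : ℝ) ^ α := by linarith
    have hp : 0 < (j : ℝ) ^ α := Real.rpow_pos_of_pos hjR _
    have hq : 0 < (j : ℝ) ^ (-α) := Real.rpow_pos_of_pos hjR _
    have hpq : (j : ℝ) ^ α * (j : ℝ) ^ (-α) = 1 := by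
      rw [← Real.rpow_add hjR]; simp
    nlinarith
  set Cp := (1 + δ) * c₀ with hCp
  set Cm := (1 - δ) * c₀ with hCm
  have hCp0 : 0 < Cp := by rw [hCp]; nlinarith
  have hCm0 : 0 < Cm := by rw [hCm]; nlinarith
  set cU : ℝ := -(J : ℝ) - 2 with hcU
  set cL : ℝ := (J : ℝ) + 2 with hcL
  set up : ℝ → ℝ := fun y => Cp * (y + cU) ^ (-α) with hup
  set um : ℝ → ℝ := fun y => Cm * (y + cL) ^ (-α) with hum
  -- bounds from the little-o hypothesis
  have hτb : ∀ᶠ u in 𝓝[>] (0 : ℝ), (1 - δ) * u ≤ g u ∧ g u ≤ (1 + δ) * u := by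
    have h := (Asymptotics.isLittleO_iff.mp hτ) hδ0
    filter_upwards [h, self_mem_nhdsWithin] with u h1 h2
    simp only [Set.mem_Ioi] at h2
    rw [Real.norm_eq_abs, Real.norm_eq_abs, abs_of_pos h2, abs_le] at h1
    constructor <;> [skip; skip] <;> · simp only [hg]; nlinarith [h1.1, h1.2]
  have hE1 : ∀ᶠ y in atTop, (1 - δ) * up y ≤ g (up y) ∧ g (up y) ≤ (1 + δ) * up y :=
    (tendsto_aux_u α Cp cU hα0 hCp0).eventually hτb
  have hE2 : ∀ᶠ y in atTop, (1 - δ) * um y ≤ g (um y) ∧ g (um y) ≤ (1 + δ) * um y :=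
    (tendsto_aux_u α Cm cL hα0 hCm0).eventually hτb
  -- limit bounds
  have hGU : ∀ᶠ y in atTop, y ^ α * ((1 + δ) * Cp * (y + cU) ^ (-α)) < c₀ + ε := by
    apply (tendsto_aux_ratio α ((1 + δ) * Cp) cU hα0).eventually_lt_const
    rw [hCp]; nlinarith
  have hGL : ∀ᶠ y in atTop, c₀ - ε < y ^ α * ((1 - δ) * Cm * (y + cL) ^ (-α)) := by
    apply (tendsto_aux_ratio α ((1 - δ) * Cm) cL hα0).eventually_const_lt
    rw [hCm]; nlinarith
  filter_upwards [hE1, hE2, hGU, hGL, eventually_ge_atTop ((J : ℝ) + 3),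
    eventually_ge_atTop (1 : ℝ)] with y hE1y hE2y hGUy hGLy hy3 hy1
  set Z : Ω → ℝ := fun ω => ∑' j : ℕ, if τ ω ≤ a j then (1 : ℝ) else 0 with hZ
  have hyα : (0 : ℝ) ≤ y ^ α := Real.rpow_nonneg (by linarith) α
  have hupy : 0 < up y := by
    rw [hup]
    exact mul_pos hCp0 (Real.rpow_pos_of_pos (by rw [hcU]; linarith) _)
  -- upper inclusion
  have hsub1 : {ω | y < Z ω} ⊆ {ω | τ ω ≤ up y} ∪ {ω | τ ω ≤ 0} := by
    intro ω hω
    by_cases h : 0 < τ ω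
    · left
      simp only [Set.mem_setOf_eq]
      by_contra hc
      push_neg at hc
      have := aux_upper hα0 hCp0 J haU h hy3 (by simp only [hup, hcU] at hc; exact hc)
      exact absurd this (not_le.mpr hω)
    · right; exact not_lt.mp h
  -- lower inclusion
  have hsub2 : {ω | τ ω ≤ um y} ⊆ {ω | y < Z ω} ∪ {ω | τ ω ≤ 0} := by
    intro ω hω
    by_cases h : 0 < τ ω
    · left
      simp only [Set.mem_setOf_eq] at hω ⊢
      exact aux_lower hα0 hCm0 ha0 J hJ1 haL h (by linarith)
        (by simp only [hum, hcL] at hω; rw [show y + ((J:ℝ)+2) = y + (J:ℝ) + 2 from by ring] at hω; exact hω)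
    · right; exact not_lt.mp h
  -- measure comparisons
  have hm1 : P {ω | y < Z ω} ≤ P {ω | τ ω ≤ up y} := by
    calc P {ω | y < Z ω} ≤ P ({ω | τ ω ≤ up y} ∪ {ω | τ ω ≤ 0}) := measure_mono hsub1
      _ ≤ P {ω | τ ω ≤ up y} + P {ω | τ ω ≤ 0} := measure_union_le _ _
      _ = P {ω | τ ω ≤ up y} := by rw [hnull, add_zero]
  have hm2 : P {ω | τ ω ≤ um y} ≤ P {ω | y < Z ω} := by
    calc P {ω | τ ω ≤ um y} ≤ P ({ω | y < Z ω} ∪ {ω | τ ω ≤ 0}) := measure_mono hsub2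
      _ ≤ P {ω | y < Z ω} + P {ω | τ ω ≤ 0} := measure_union_le _ _
      _ = P {ω | y < Z ω} := by rw [hnull, add_zero]
  have hm1' : (P {ω | y < Z ω}).toReal ≤ g (up y) :=
    ENNReal.toReal_mono (measure_ne_top P _) hm1
  have hm2' : g (um y) ≤ (P {ω | y < Z ω}).toReal :=
    ENNReal.toReal_mono (measure_ne_top P _) hm2
  -- assemble
  have hup1 : y ^ α * (P {ω | y < Z ω}).toReal ≤ y ^ α * ((1 + δ) * up y) :=
    mul_le_mul_of_nonneg_left (le_trans hm1' hE1y.2) hyα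
  have hlo1 : y ^ α * ((1 - δ) * um y) ≤ y ^ α * (P {ω | y < Z ω}).toReal :=
    mul_le_mul_of_nonneg_left (le_trans hE2y.1 hm2') hyα
  have heq1 : y ^ α * ((1 + δ) * up y) = y ^ α * ((1 + δ) * Cp * (y + cU) ^ (-α)) := by
    rw [hup]; ring
  have heq2 : y ^ α * ((1 - δ) * um y) = y ^ α * ((1 - δ) * Cm * (y + cL) ^ (-α)) := by
    rw [hum]; ring
  rw [Real.dist_eq, abs_lt]
  constructor
  · rw [heq2] at hlo1
    simp only [hZ] at hlo1
    linarith
  · rw [heq1] at hup1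
    simp only [hZ] at hup1
    linarith
end
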